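/- Let μ be a probability measure on a response space α, let r : α → ℝ be measurable with 0 ≤ r(a) ≤ 1 for μ-almost every a, let s : α → ℝⁿ be a score function, and let F be a symmetric positive semidefinite real n×n matrix. With baseline b = ∫ r dμ, advantage A(a) = r(a) − b, IWSN I(a) = s(a)ᵀ F s(a), forgetting risk R(g) = gᵀ F g, RFT gradient g_RFT(a) = A(a) • s(a), SFT gradient g_SFT = s(a*) for a fixed a* ∈ α, ε₁ = ∫ A² I dμ − (∫ A² dμ)(∫ I dμ), and δ = ∫ I dμ − I(a*), assume A²·I, A², and I are μ-integrable. Then ∫ R(g_RFT(a)) dμ(a) ≤ (1/4) · R(g_SFT) + (1/4) · |δ| + ε₁. -/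

import Mathlib

open MeasureTheory Matrix

/-- Corollary of Theorem 1 and the bound `Var[r] ≤ 1/4` for rewards in `[0,1]`:
the expected forgetting risk of the RFT update is bounded by
`(1/4)·R(g_SFT) + (1/4)·|δ| + ε₁`. -/
theorem rft_forgetting_risk_bound
    {α : Type*} [MeasurableSpace α] (μ : Measure α) [IsProbabilityMeasure μ]
    {n : ℕ} (r : α → ℝ) (hmeas : Measurable r)
    (hbound : ∀ᵐ a ∂μ, 0 ≤ r a ∧ r a ≤ 1)
    (s : α → Fin n → ℝ) (F : Matrix (Fin n) (Fin n) ℝ) (hF : F.PosSemidef)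
    (astar : α)
    -- advantage with the mean baseline
    (A : α → ℝ) (hA : ∀ a, A a = r a - ∫ a, r a ∂μ)
    -- importance-weighted score norm
    (I : α → ℝ) (hI : ∀ a, I a = s a ⬝ᵥ F.mulVec (s a))
    -- integrability assumptions
    (hAI : Integrable (fun a => A a ^ 2 * I a) μ)
    (hA2 : Integrable (fun a => A a ^ 2) μ)
    (hIint : Integrable I μ)
    -- error terms
    (ε₁ : ℝ)
    (hε₁ : ε₁ = ∫ a, A a ^ 2 * I a ∂μ - (∫ a, A a ^ 2 ∂μ) * (∫ a, I a ∂μ))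
    (δ : ℝ) (hδ : δ = (∫ a, I a ∂μ) - I astar) :
    ∫ a, (A a • s a) ⬝ᵥ F.mulVec (A a • s a) ∂μ
      ≤ (1 / 4) * (s astar ⬝ᵥ F.mulVec (s astar)) + (1 / 4) * |δ| + ε₁ := by
  set m := ∫ a, r a ∂μ with hm
  -- rewrite the integrand
  have hintegrand : ∀ a, (A a • s a) ⬝ᵥ F.mulVec (A a • s a) = A a ^ 2 * I a := by
    intro a
    simp [hI, Matrix.mulVec_smul, smul_dotProduct, dotProduct_smul, smul_eq_mul]
    ring
  have hLHS : ∫ a, (A a • s a) ⬝ᵥ F.mulVec (A a • s a) ∂μ = ∫ a, A a ^ 2 * I a ∂μ := by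
    simp only [hintegrand]
  rw [hLHS]
  -- nonnegativity of I
  have hIpos : ∀ a, 0 ≤ I a := by
    intro a
    have := hF.dotProduct_mulVec_nonneg (s a)
    simpa [hI] using this
  have hEI : 0 ≤ ∫ a, I a ∂μ := integral_nonneg hIpos
  -- integrability of r and r^2
  have hr_int : Integrable r μ := by
    refine (integrable_const (1:ℝ)).mono' hmeas.aestronglyMeasurable ?_
    filter_upwards [hbound] with a ⟨h0, h1⟩
    rw [Real.norm_eq_abs, abs_of_nonneg h0]; exact h1
  have hr2_int : Integrable (fun a => r a ^ 2) μ := by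
    refine (integrable_const (1:ℝ)).mono' (hmeas.pow_const 2).aestronglyMeasurable ?_
    filter_upwards [hbound] with a ⟨h0, h1⟩
    rw [Real.norm_eq_abs, abs_of_nonneg (sq_nonneg _)]
    nlinarith
  -- E[A²] = E[r²] - m²
  have hm01 : 0 ≤ m ∧ m ≤ 1 := by
    constructor
    · exact integral_nonneg_of_ae (hbound.mono fun a h => h.1)
    · calc m ≤ ∫ _, (1:ℝ) ∂μ := integral_mono_ae hr_int (integrable_const 1)
            (hbound.mono fun a h => h.2)
        _ = 1 := by simp
  have hEA2 : ∫ a, A a ^ 2 ∂μ ≤ 1 / 4 := by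
    have heq : (fun a => A a ^ 2) = fun a => r a ^ 2 - (2 * m) * r a + m ^ 2 := by
      funext a; rw [hA]; ring
    have hval : ∫ a, A a ^ 2 ∂μ = (∫ a, r a ^ 2 ∂μ) - m ^ 2 := by
      rw [heq, integral_add (by exact hr2_int.sub (hr_int.const_mul _)) (integrable_const _),
        integral_sub hr2_int (hr_int.const_mul _), integral_const_mul, integral_const]
      simp only [measure_univ, probReal_univ, ENNReal.toReal_one, one_smul, ← hm]
      ring
    have hr2r : ∫ a, r a ^ 2 ∂μ ≤ m := by
      exact integral_mono_ae hr2_int hr_int (hbound.mono fun a ⟨h0, h1⟩ => by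
        show r a ^ 2 ≤ r a; nlinarith)
    rw [hval]
    nlinarith [hm01.1, hm01.2, sq_nonneg (m - 1/2)]
  have hA2nn : 0 ≤ ∫ a, A a ^ 2 ∂μ := integral_nonneg fun a => sq_nonneg _
  have hIa : I astar ≤ 1 * (s astar ⬝ᵥ F.mulVec (s astar)) := by rw [hI]; ring_nf; exact le_rfl
  have hEIle : ∫ a, I a ∂μ ≤ s astar ⬝ᵥ F.mulVec (s astar) + |δ| := by
    have : ∫ a, I a ∂μ = I astar + δ := by rw [hδ]; ring
    rw [this, hI]
    nlinarith [le_abs_self δ]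
  nlinarith [mul_le_mul hEA2 hEIle hEI (by norm_num : (0:ℝ) ≤ 1/4),
    abs_nonneg δ, (by have := hF.dotProduct_mulVec_nonneg (s astar); simpa using this : 0 ≤ s astar ⬝ᵥ F.mulVec (s astar)), mul_nonneg hA2nn hEI]
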